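/- Fix integers n, m, k with 1 ≤ k < n and m ≥ 2. The probability that there exist indices i < j and a position a with x_i(a) = x_j(a) is at least [ (m choose 2)·(n − k + 1)·2^{−k} ]² / ( m⁴·n²·2^{−2k} + 2·m²·n·k·2^{−k} ). -/

import Mathlib

/-- The symbol of `x` at (0-indexed) position `t`, with junk value `false` out of range. -/
def get {n : ℕ} (x : Fin n → Bool) (t : ℕ) : Bool :=
  if h : t < n then x ⟨t, h⟩ else false

/-- The `k`-mer of `x` starting at (0-indexed) position `a`. -/
def kmer {n : ℕ} (k : ℕ) (x : Fin n → Bool) (a : ℕ) : Fin k → Bool :=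
  fun t => get x (a + t.val)

/-- Probability of an event under the uniform distribution on a finite sample space. -/
noncomputable def prob {Ω : Type*} [Fintype Ω] (p : Ω → Prop) : ℝ :=
  (Nat.card {ω // p ω} : ℝ) / (Fintype.card Ω : ℝ)


open Finset

lemma card_constrained {α : Type*} [Fintype α] [DecidableEq α]
    (D : Finset α) (h : (α → Bool) → α → Bool)
    (hdep : ∀ f g : α → Bool, (∀ c, c ∉ D → f c = g c) → ∀ c ∈ D, h f c = h g c) :
    Nat.card {f : α → Bool // ∀ c ∈ D, f c = h f c} =
      2 ^ (Fintype.card α - D.card) := by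
  classical
  set ext : ({c : α // c ∉ D} → Bool) → α → Bool :=
    fun g c => if hc : c ∈ D then false else g ⟨c, hc⟩ with hext
  let e : {f : α → Bool // ∀ c ∈ D, f c = h f c} ≃ ({c : α // c ∉ D} → Bool) :=
    { toFun := fun f c => f.1 c.1
      invFun := fun g => ⟨fun c => if hc : c ∈ D then h (ext g) c else g ⟨c, hc⟩, by
        intro c hc
        have agree : ∀ c', c' ∉ D →
            (fun c => if hc : c ∈ D then h (ext g) c else g ⟨c, hc⟩) c' = ext g c' := by
          intro c' hc'; simp [hc', hext]
        have := hdep _ _ agree c hc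
        simp [hc, this]⟩
      left_inv := by
        intro f
        ext c
        by_cases hc : c ∈ D
        · have agree : ∀ c', c' ∉ D → ext (fun c => f.1 c.1) c' = f.1 c' := by
            intro c' hc'; simp [hext, hc']
          have := hdep _ _ agree c hc
          simp [hc, this, (f.2 c hc).symm]
        · simp [hc]
      right_inv := by
        intro g
        ext c
        simp [c.2] }
  rw [Nat.card_congr e]
  rw [Nat.card_eq_fintype_card]
  rw [Fintype.card_fun]
  rw [Fintype.card_subtype_compl, Fintype.card_coe]
  simp

section Win
variable {n m k : ℕ}

/-- The window of `k` coordinates in row `s` starting at column `a`. -/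
def win (m : ℕ) (s : Fin m) (a k : ℕ) {n : ℕ} (ha : a + k ≤ n) : Finset (Fin m × Fin n) :=
  (Finset.range k).attach.image fun t =>
    (s, ⟨a + t.1, by have := Finset.mem_range.mp t.2; omega⟩)

lemma mem_win {s : Fin m} {a : ℕ} (ha : a + k ≤ n) (c : Fin m × Fin n) :
    c ∈ win m s a k ha ↔ c.1 = s ∧ a ≤ c.2.val ∧ c.2.val < a + k := by
  simp only [win, Finset.mem_image, Finset.mem_attach, true_and, Subtype.exists,
    Finset.mem_range]
  constructor
  · rintro ⟨t, ht, rfl⟩; exact ⟨rfl, by simp, by simp [ht]⟩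
  · rintro ⟨h1, h2, h3⟩
    refine ⟨c.2.val - a, by omega, ?_⟩
    rw [Prod.ext_iff]
    exact ⟨h1.symm, by ext; simp; omega⟩

lemma card_win {s : Fin m} {a : ℕ} (ha : a + k ≤ n) : (win m s a k ha).card = k := by
  rw [win, Finset.card_image_of_injective, Finset.card_attach, Finset.card_range]
  intro t1 t2 h
  rw [Prod.ext_iff] at h
  have := congrArg Fin.val h.2
  simp at this
  exact this

end Win

section Counts
variable {n m k : ℕ}

lemma count_single (r s : Fin m) (a : ℕ) (ha : a + k ≤ n) (hrs : r ≠ s) :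
    Nat.card {f : Fin m × Fin n → Bool //
      ∀ c : Fin n, a ≤ c.val → c.val < a + k → f (s, c) = f (r, c)} = 2 ^ (n * m - k) := by
  classical
  have hiff : ∀ f : Fin m × Fin n → Bool,
      (∀ c : Fin n, a ≤ c.val → c.val < a + k → f (s, c) = f (r, c)) ↔
      (∀ c ∈ win m s a k ha, f c = (fun (g : Fin m × Fin n → Bool) (c : Fin m × Fin n) =>
        g (r, c.2)) f c) := by
    intro f
    constructor
    · rintro h ⟨r', c⟩ hc
      rw [mem_win ha] at hc
      obtain ⟨rfl, h2, h3⟩ := hc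
      exact h c h2 h3
    · intro h c h2 h3
      exact h (s, c) ((mem_win ha _).mpr ⟨rfl, h2, h3⟩)
  rw [Nat.card_congr (Equiv.subtypeEquivRight hiff), card_constrained]
  · congr 1
    rw [card_win ha]
    congr 1
    simp [Fintype.card_fun, mul_comm]
  · intro f g hfg c hc
    rw [mem_win ha] at hc
    refine hfg _ ?_
    rw [mem_win ha]
    rintro ⟨h1, -⟩
    exact hrs h1

end Counts


section Counts2
variable {n m k : ℕ}

lemma count_pair (r1 s1 r2 s2 : Fin m) (a b : ℕ) (ha : a + k ≤ n) (hb : b + k ≤ n)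
    (hd : s1 ≠ s2 ∨ a + k ≤ b ∨ b + k ≤ a)
    (h11 : r1 ≠ s1) (h12 : r1 ≠ s2) (h21 : r2 ≠ s1) (h22 : r2 ≠ s2) :
    Nat.card {f : Fin m × Fin n → Bool //
      (∀ c : Fin n, a ≤ c.val → c.val < a + k → f (s1, c) = f (r1, c)) ∧
      (∀ c : Fin n, b ≤ c.val → c.val < b + k → f (s2, c) = f (r2, c))} =
      2 ^ (n * m - 2 * k) := by
  classical
  set D : Finset (Fin m × Fin n) := win m s1 a k ha ∪ win m s2 b k hb with hD
  have hdisj : Disjoint (win m s1 a k ha) (win m s2 b k hb) := by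
    rw [Finset.disjoint_left]
    intro c hc1 hc2
    rw [mem_win ha] at hc1
    rw [mem_win hb] at hc2
    rcases hd with h | h | h
    · exact h (hc1.1 ▸ hc2.1)
    · omega
    · omega
  set h : (Fin m × Fin n → Bool) → (Fin m × Fin n) → Bool := fun f c =>
    if a ≤ c.2.val ∧ c.2.val < a + k ∧ c.1 = s1 then f (r1, c.2) else f (r2, c.2) with hh
  have hcond : ∀ (c : Fin n), b ≤ c.val → c.val < b + k →
      ¬(a ≤ c.val ∧ c.val < a + k ∧ s2 = s1) := by
    rintro c h2 h3 ⟨g1, g2, g3⟩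
    rcases hd with h' | h' | h'
    · exact h' g3.symm
    · omega
    · omega
  have nm1 : ∀ c : Fin n, (r1, c) ∉ D := by
    intro c hc
    rw [hD, Finset.mem_union, mem_win ha, mem_win hb] at hc
    rcases hc with h' | h'
    · exact h11 h'.1
    · exact h12 h'.1
  have nm2 : ∀ c : Fin n, (r2, c) ∉ D := by
    intro c hc
    rw [hD, Finset.mem_union, mem_win ha, mem_win hb] at hc
    rcases hc with h' | h'
    · exact h21 h'.1
    · exact h22 h'.1
  have hiff : ∀ f : Fin m × Fin n → Bool,
      ((∀ c : Fin n, a ≤ c.val → c.val < a + k → f (s1, c) = f (r1, c)) ∧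
       (∀ c : Fin n, b ≤ c.val → c.val < b + k → f (s2, c) = f (r2, c))) ↔
      (∀ c ∈ D, f c = h f c) := by
    intro f
    constructor
    · rintro ⟨e1, e2⟩ ⟨r', c⟩ hc
      rw [hD, Finset.mem_union, mem_win ha, mem_win hb] at hc
      show f (r', c) =
        if a ≤ c.val ∧ c.val < a + k ∧ r' = s1 then f (r1, c) else f (r2, c)
      rcases hc with ⟨e, h2, h3⟩ | ⟨e, h2, h3⟩
      · simp only at e
        subst e
        rw [if_pos ⟨h2, h3, rfl⟩]
        exact e1 c h2 h3
      · simp only at e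
        subst e
        rw [if_neg (hcond c h2 h3)]
        exact e2 c h2 h3
    · intro hf
      constructor
      · intro c h2 h3
        have hm : (s1, c) ∈ D := by
          rw [hD, Finset.mem_union]; left; rw [mem_win ha]; exact ⟨rfl, h2, h3⟩
        have e : f (s1, c) =
            if a ≤ c.val ∧ c.val < a + k ∧ s1 = s1 then f (r1, c) else f (r2, c) :=
          hf _ hm
        rwa [if_pos ⟨h2, h3, rfl⟩] at e
      · intro c h2 h3
        have hm : (s2, c) ∈ D := by
          rw [hD, Finset.mem_union]; right; rw [mem_win hb]; exact ⟨rfl, h2, h3⟩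
        have e : f (s2, c) =
            if a ≤ c.val ∧ c.val < a + k ∧ s2 = s1 then f (r1, c) else f (r2, c) :=
          hf _ hm
        rwa [if_neg (hcond c h2 h3)] at e
  rw [Nat.card_congr (Equiv.subtypeEquivRight hiff), card_constrained]
  · congr 1
    rw [hD, Finset.card_union_of_disjoint hdisj, card_win ha, card_win hb]
    congr 1
    · simp [Fintype.card_fun, mul_comm]
    · omega
  · intro f g hfg c hc
    show (if a ≤ c.2.val ∧ c.2.val < a + k ∧ c.1 = s1 then f (r1, c.2) else f (r2, c.2)) =
      (if a ≤ c.2.val ∧ c.2.val < a + k ∧ c.1 = s1 then g (r1, c.2) else g (r2, c.2))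
    split
    · exact hfg _ (nm1 _)
    · exact hfg _ (nm2 _)

end Counts2

lemma kmer_eq_iff {n k : ℕ} (x y : Fin n → Bool) (a : ℕ) (ha : a + k ≤ n) :
    kmer k x a = kmer k y a ↔ ∀ c : Fin n, a ≤ c.val → c.val < a + k → x c = y c := by
  rw [funext_iff]
  constructor
  · intro h c h2 h3
    have ht : c.val - a < k := by omega
    have := h ⟨c.val - a, ht⟩
    simp only [kmer, _root_.get] at this
    rw [dif_pos (by omega), dif_pos (by omega)] at this
    convert this using 2 <;> · ext; simp; omega
  · intro h t
    simp only [kmer, _root_.get]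
    have hlt : a + t.val < n := by omega
    rw [dif_pos hlt, dif_pos hlt]
    exact h ⟨a + t.val, hlt⟩ (by simp) (by have := t.isLt; simp only [Fin.val_mk]; omega)

lemma card_pairs (m : ℕ) :
    ((Finset.univ : Finset (Fin m × Fin m)).filter fun p => p.1 < p.2).card = m.choose 2 := by
  have h1 : ((Finset.univ : Finset (Fin m × Fin m)).filter fun p => p.1 < p.2).card =
      ((Finset.univ : Finset (Fin m × Fin m)).filter fun p => p.2 < p.1).card := by
    apply Finset.card_bij (fun p _ => Prod.swap p)
    · rintro ⟨i, j⟩ hp; simp_all [Finset.mem_filter]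
    · rintro ⟨i, j⟩ - ⟨i', j'⟩ - h; simpa [Prod.ext_iff, and_comm] using h
    · rintro ⟨i, j⟩ hp; exact ⟨(j, i), by simp_all [Finset.mem_filter], rfl⟩
  have h2 : ((Finset.univ : Finset (Fin m × Fin m)).filter fun p => p.1 < p.2) ∪
      ((Finset.univ : Finset (Fin m × Fin m)).filter fun p => p.2 < p.1) =
      (Finset.univ : Finset (Fin m)).offDiag := by
    ext ⟨i, j⟩
    simp only [Finset.mem_union, Finset.mem_filter, Finset.mem_univ, true_and,
      Finset.mem_offDiag]
    exact lt_or_lt_iff_ne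
  have h3 : Disjoint ((Finset.univ : Finset (Fin m × Fin m)).filter fun p => p.1 < p.2)
      ((Finset.univ : Finset (Fin m × Fin m)).filter fun p => p.2 < p.1) := by
    rw [Finset.disjoint_left]
    rintro ⟨i, j⟩ h1 h2
    simp [Finset.mem_filter] at h1 h2
    exact absurd h2 (not_lt.mpr h1.le)
  have h4 := Finset.card_union_of_disjoint h3
  rw [h2, Finset.offDiag_card, Finset.card_univ, Fintype.card_fin, ← h1] at h4
  have h5 : m.choose 2 = m * (m - 1) / 2 := Nat.choose_two_right m
  have h6 : m * (m - 1) = m * m - m := by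
    rcases Nat.eq_zero_or_pos m with h | h
    · simp [h]
    · have : m - 1 + 1 = m := Nat.succ_pred_eq_of_pos h
      calc m * (m - 1) = m * (m - 1 + 1) - m := by rw [Nat.mul_add]; omega
        _ = m * m - m := by rw [this]
  omega

section Quad
variable {n m k : ℕ}

private lemma flip_iff (u v : Fin m) (w : ℕ) (f : Fin m × Fin n → Bool) :
    (∀ c : Fin n, w ≤ c.val → c.val < w + k → f (u, c) = f (v, c)) ↔
    (∀ c : Fin n, w ≤ c.val → c.val < w + k → f (v, c) = f (u, c)) :=
  ⟨fun h c h1 h2 => (h c h1 h2).symm, fun h c h1 h2 => (h c h1 h2).symm⟩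

lemma quad_count (i1 j1 i2 j2 : Fin m) (a b : ℕ)
    (hlt1 : i1 < j1) (hlt2 : i2 < j2) (ha : a + k ≤ n) (hb : b + k ≤ n)
    (hgood : ¬(i1 = i2 ∧ j1 = j2) ∨ a + k ≤ b ∨ b + k ≤ a) :
    Nat.card {f : Fin m × Fin n → Bool //
      (∀ c : Fin n, a ≤ c.val → c.val < a + k → f (i1, c) = f (j1, c)) ∧
      (∀ c : Fin n, b ≤ c.val → c.val < b + k → f (i2, c) = f (j2, c))} =
      2 ^ (n * m - 2 * k) := by
  have v1 : i1.val < j1.val := hlt1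
  have v2 : i2.val < j2.val := hlt2
  rcases eq_or_ne i1 i2 with hii | hii
  · rcases eq_or_ne j1 j2 with hjj | hjj
    · -- same pair: windows must be disjoint
      have hdisj : a + k ≤ b ∨ b + k ≤ a := by
        rcases hgood with h | h | h
        · exact absurd ⟨hii, hjj⟩ h
        · exact Or.inl h
        · exact Or.inr h
      have vii : i1.val = i2.val := by rw [hii]
      have vjj : j1.val = j2.val := by rw [hjj]
      exact Nat.card_congr (Equiv.subtypeEquivRight (fun f => Iff.rfl)) |>.trans
        (count_pair j1 i1 j2 i2 a b ha hb (Or.inr hdisj)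
          (Fin.ne_of_val_ne (by omega)) (Fin.ne_of_val_ne (by omega))
          (Fin.ne_of_val_ne (by omega)) (Fin.ne_of_val_ne (by omega)))
    · -- i1 = i2, j1 ≠ j2 : determine j1, j2 (flip both)
      have vjj : j1.val ≠ j2.val := fun h => hjj (Fin.val_injective h)
      have vii : i1.val = i2.val := by rw [hii]
      refine Nat.card_congr (Equiv.subtypeEquivRight (fun f =>
        and_congr (flip_iff i1 j1 a f) (flip_iff i2 j2 b f))) |>.trans
        (count_pair i1 j1 i2 j2 a b ha hb (Or.inl hjj)
          (Fin.ne_of_val_ne (by omega)) (Fin.ne_of_val_ne (by omega))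
          (Fin.ne_of_val_ne (by omega)) (Fin.ne_of_val_ne (by omega)))
  · rcases eq_or_ne j1 j2 with hjj | hjj
    · -- j1 = j2, i1 ≠ i2 : determine i1, i2 (direct both)
      have vii : i1.val ≠ i2.val := fun h => hii (Fin.val_injective h)
      have vjj : j1.val = j2.val := by rw [hjj]
      refine Nat.card_congr (Equiv.subtypeEquivRight (fun f => Iff.rfl)) |>.trans
        (count_pair j1 i1 j2 i2 a b ha hb (Or.inl (Fin.ne_of_val_ne vii))
          (Fin.ne_of_val_ne (by omega)) (Fin.ne_of_val_ne (by omega))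
          (Fin.ne_of_val_ne (by omega)) (Fin.ne_of_val_ne (by omega)))
    · rcases eq_or_ne i1 j2 with hij | hij
      · -- i1 = j2 : E1 flip (det j1 from i1), E2 direct (det i2 from j2)
        have vij : i1.val = j2.val := by rw [hij]
        refine Nat.card_congr (Equiv.subtypeEquivRight (fun f =>
          and_congr (flip_iff i1 j1 a f) Iff.rfl)) |>.trans
          (count_pair i1 j1 j2 i2 a b ha hb (Or.inl (Fin.ne_of_val_ne (by omega)))
            (Fin.ne_of_val_ne (by omega)) (Fin.ne_of_val_ne (by omega))
            (Fin.ne_of_val_ne (by omega)) (Fin.ne_of_val_ne (by omega)))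
      · rcases eq_or_ne j1 i2 with hji | hji
        · -- j1 = i2 : E1 direct (det i1 from j1), E2 flip (det j2 from i2)
          have vji : j1.val = i2.val := by rw [hji]
          refine Nat.card_congr (Equiv.subtypeEquivRight (fun f =>
            and_congr Iff.rfl (flip_iff i2 j2 b f))) |>.trans
            (count_pair j1 i1 i2 j2 a b ha hb (Or.inl (Fin.ne_of_val_ne (by omega)))
              (Fin.ne_of_val_ne (by omega)) (Fin.ne_of_val_ne (by omega))
              (Fin.ne_of_val_ne (by omega)) (Fin.ne_of_val_ne (by omega)))
        · -- all distinct : flip both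
          have vii : i1.val ≠ i2.val := fun h => hii (Fin.val_injective h)
          have vjj : j1.val ≠ j2.val := fun h => hjj (Fin.val_injective h)
          have vij : i1.val ≠ j2.val := fun h => hij (Fin.val_injective h)
          have vji : j1.val ≠ i2.val := fun h => hji (Fin.val_injective h)
          refine Nat.card_congr (Equiv.subtypeEquivRight (fun f =>
            and_congr (flip_iff i1 j1 a f) (flip_iff i2 j2 b f))) |>.trans
            (count_pair i1 j1 i2 j2 a b ha hb (Or.inl (Fin.ne_of_val_ne vjj))
              (Fin.ne_of_val_ne (by omega)) (Fin.ne_of_val_ne (by omega))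
              (Fin.ne_of_val_ne (by omega)) (Fin.ne_of_val_ne (by omega)))

end Quad

lemma filter_card_eq_nat_card {α : Type*} [Fintype α] (p : α → Prop) [DecidablePred p] :
    (Finset.univ.filter p).card = Nat.card {x // p x} := by
  rw [Nat.card_eq_fintype_card, Fintype.card_subtype]


/-- Paley–Zygmund lower bound: the probability that two distinct strings share a
`k`-mer at an aligned position is at least
`[(m choose 2)·(n-k+1)·2^{-k}]² / (m⁴·n²·2^{-2k} + 2·m²·n·k·2^{-k})`. -/
theorem aligned_repeat_prob_lower_bound
    (n m k : ℕ) (hk : 1 ≤ k) (hkn : k < n) (hm : 2 ≤ m) :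
    ((m.choose 2 : ℝ) * ((n - k + 1 : ℕ) : ℝ) / 2 ^ k) ^ 2 /
        ((m : ℝ) ^ 4 * (n : ℝ) ^ 2 / 2 ^ (2 * k) +
          2 * (m : ℝ) ^ 2 * (n : ℝ) * (k : ℝ) / 2 ^ k) ≤
      prob (fun X : Fin m → Fin n → Bool =>
        ∃ i j : Fin m, i < j ∧ ∃ a : ℕ, a + k ≤ n ∧
          kmer k (X i) a = kmer k (X j) a) := by
  classical
  -- basic arithmetic facts
  have hn1 : 1 ≤ n := by omega
  have hknm : k ≤ n * m := by
    have : n ≤ n * m := Nat.le_mul_of_pos_right n (by omega)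
    omega
  have h2knm : 2 * k ≤ n * m := by
    calc 2 * k ≤ 2 * n := by omega
    _ ≤ m * n := Nat.mul_le_mul_right n hm
    _ = n * m := Nat.mul_comm m n
  -- the index set and indicator
  set PA : Finset ((Fin m × Fin m) × ℕ) :=
    ((Finset.univ : Finset (Fin m × Fin m)).filter fun p => p.1 < p.2) ×ˢ
      Finset.range (n - k + 1) with hPAdef
  set E : (Fin m × Fin m) × ℕ → (Fin m × Fin n → Bool) → Prop :=
    fun z f => ∀ c : Fin n, z.2 ≤ c.val → c.val < z.2 + k → f (z.1.1, c) = f (z.1.2, c)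
    with hEdef
  set ind : (Fin m × Fin m) × ℕ → (Fin m × Fin n → Bool) → ℕ :=
    fun z f => if E z f then 1 else 0 with hind
  set V : (Fin m × Fin n → Bool) → ℕ := fun f => ∑ z ∈ PA, ind z f with hV
  have hPA : ∀ z ∈ PA, z.1.1 < z.1.2 ∧ z.2 + k ≤ n := by
    intro z hz
    rw [hPAdef, Finset.mem_product, Finset.mem_filter, Finset.mem_range] at hz
    exact ⟨hz.1.2, by omega⟩
  have hPAmem : ∀ (i j : Fin m) (a : ℕ), i < j → a + k ≤ n → ((i, j), a) ∈ PA := by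
    intro i j a hij ha
    rw [hPAdef, Finset.mem_product, Finset.mem_filter, Finset.mem_range]
    exact ⟨⟨Finset.mem_univ _, hij⟩, by omega⟩
  have hPAcard : PA.card = m.choose 2 * (n - k + 1) := by
    rw [hPAdef, Finset.card_product, card_pairs, Finset.card_range]
  -- first moment
  have count1 : ∀ z ∈ PA, (Finset.univ.filter fun f : Fin m × Fin n → Bool => E z f).card
      = 2 ^ (n * m - k) := by
    intro z hz
    rw [filter_card_eq_nat_card]
    exact count_single z.1.2 z.1.1 z.2 (hPA z hz).2 (ne_of_gt (hPA z hz).1)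
  have hsum1 : ∀ z ∈ PA, (∑ f : Fin m × Fin n → Bool, ind z f) = 2 ^ (n * m - k) := by
    intro z hz
    rw [hind]
    simp only [Finset.sum_boole, Nat.cast_id]
    rw [← count1 z hz, Finset.card_filter]
  set S1 : ℕ := ∑ f : Fin m × Fin n → Bool, V f with hS1def
  have hS1 : S1 = m.choose 2 * (n - k + 1) * 2 ^ (n * m - k) := by
    rw [hS1def]
    simp only [hV]
    rw [Finset.sum_comm]
    rw [Finset.sum_congr rfl hsum1, Finset.sum_const, hPAcard, smul_eq_mul]
  -- second moment
  set S2 : ℕ := ∑ f : Fin m × Fin n → Bool, V f * V f with hS2def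
  have hS2 : S2 = ∑ z ∈ PA, ∑ w ∈ PA, ∑ f : Fin m × Fin n → Bool, ind z f * ind w f := by
    rw [hS2def]
    have e1 : ∀ f : Fin m × Fin n → Bool,
        V f * V f = ∑ z ∈ PA, ∑ w ∈ PA, ind z f * ind w f := by
      intro f; rw [hV]; exact Finset.sum_mul_sum PA PA _ _
    rw [Finset.sum_congr rfl fun f _ => e1 f, Finset.sum_comm]
    exact Finset.sum_congr rfl fun z _ => Finset.sum_comm
  have hterm : ∀ z ∈ PA, ∀ w ∈ PA,
      (∑ f : Fin m × Fin n → Bool, ind z f * ind w f) ≤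
      (if z.1 = w.1 ∧ z.2 < w.2 + k ∧ w.2 < z.2 + k then 2 ^ (n * m - k)
        else 2 ^ (n * m - 2 * k)) := by
    intro z hz w hw
    have hmul : ∀ f : Fin m × Fin n → Bool,
        ind z f * ind w f = if E z f ∧ E w f then 1 else 0 := by
      intro f
      show (if E z f then 1 else 0) * (if E w f then 1 else 0) = _
      by_cases h1 : E z f
      · by_cases h2 : E w f
        · rw [if_pos h1, if_pos h2, if_pos (⟨h1, h2⟩ : E z f ∧ E w f), one_mul]
        · rw [if_neg h2, if_neg (fun h : E z f ∧ E w f => h2 h.2), mul_zero]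
      · rw [if_neg h1, if_neg (fun h : E z f ∧ E w f => h1 h.1), zero_mul]
    rw [Finset.sum_congr rfl fun f _ => hmul f]
    rw [← Finset.card_filter]
    split_ifs with hcase
    · calc (Finset.univ.filter fun f : Fin m × Fin n → Bool => E z f ∧ E w f).card
          ≤ (Finset.univ.filter fun f : Fin m × Fin n → Bool => E z f).card := by
            refine Finset.card_le_card (Finset.monotone_filter_right _ ?_)
            intro f _ hf
            exact hf.1
      _ = 2 ^ (n * m - k) := count1 z hz
    · rw [filter_card_eq_nat_card]
      refine le_of_eq (quad_count z.1.1 z.1.2 w.1.1 w.1.2 z.2 w.2 (hPA z hz).1 (hPA w hw).1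
        (hPA z hz).2 (hPA w hw).2 ?_)
      by_cases hzw : z.1 = w.1
      · right
        have : ¬(z.2 < w.2 + k ∧ w.2 < z.2 + k) := fun h => hcase ⟨hzw, h⟩
        omega
      · left
        rintro ⟨e1, e2⟩
        exact hzw (Prod.ext e1 e2)
  -- bound S2
  have hS2le1 : S2 ≤ ∑ z ∈ PA, ∑ w ∈ PA,
      (if z.1 = w.1 ∧ z.2 < w.2 + k ∧ w.2 < z.2 + k then 2 ^ (n * m - k)
        else 2 ^ (n * m - 2 * k)) := by
    rw [hS2]
    exact Finset.sum_le_sum fun z hz => Finset.sum_le_sum fun w hw => hterm z hz w hw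
  have hsplit : ∀ z w : (Fin m × Fin m) × ℕ,
      (if z.1 = w.1 ∧ z.2 < w.2 + k ∧ w.2 < z.2 + k then 2 ^ (n * m - k)
        else 2 ^ (n * m - 2 * k)) ≤ 2 ^ (n * m - 2 * k) +
        (if z.1 = w.1 ∧ z.2 < w.2 + k ∧ w.2 < z.2 + k then 2 ^ (n * m - k) else 0) := by
    intro z w
    split_ifs with h
    · exact Nat.le_add_left _ _
    · simp
  have hbad : ∀ z ∈ PA, (∑ w ∈ PA,
      if z.1 = w.1 ∧ z.2 < w.2 + k ∧ w.2 < z.2 + k then 2 ^ (n * m - k) else 0) ≤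
      2 * k * 2 ^ (n * m - k) := by
    intro z hz
    rw [← Finset.sum_filter, Finset.sum_const, smul_eq_mul]
    have hsub : (PA.filter fun w => z.1 = w.1 ∧ z.2 < w.2 + k ∧ w.2 < z.2 + k) ⊆
        {z.1} ×ˢ ((Finset.range (n - k + 1)).filter fun b => z.2 < b + k ∧ b < z.2 + k) := by
      intro w hw
      rw [Finset.mem_filter] at hw
      obtain ⟨hwPA, h1, h2, h3⟩ := hw
      rw [Finset.mem_product, Finset.mem_singleton, Finset.mem_filter, Finset.mem_range]
      have hw2 : w.2 < n - k + 1 := by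
        rw [hPAdef, Finset.mem_product, Finset.mem_range] at hwPA
        exact hwPA.2
      exact ⟨h1.symm, hw2, h2, h3⟩
    have hcard2 : ((Finset.range (n - k + 1)).filter fun b =>
        z.2 < b + k ∧ b < z.2 + k).card ≤ 2 * k := by
      have hsub2 : ((Finset.range (n - k + 1)).filter fun b => z.2 < b + k ∧ b < z.2 + k) ⊆
          Finset.Ico (z.2 + 1 - k) (z.2 + k) := by
        intro b hb
        rw [Finset.mem_filter, Finset.mem_range] at hb
        rw [Finset.mem_Ico]
        omega
      calc ((Finset.range (n - k + 1)).filter fun b => z.2 < b + k ∧ b < z.2 + k).card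
          ≤ (Finset.Ico (z.2 + 1 - k) (z.2 + k)).card := Finset.card_le_card hsub2
        _ = (z.2 + k) - (z.2 + 1 - k) := Nat.card_Ico _ _
        _ ≤ 2 * k := by omega
    calc (PA.filter fun w => z.1 = w.1 ∧ z.2 < w.2 + k ∧ w.2 < z.2 + k).card * 2 ^ (n * m - k)
        ≤ ({z.1} ×ˢ ((Finset.range (n - k + 1)).filter fun b =>
            z.2 < b + k ∧ b < z.2 + k)).card * 2 ^ (n * m - k) :=
          Nat.mul_le_mul_right _ (Finset.card_le_card hsub)
      _ = ((Finset.range (n - k + 1)).filter fun b =>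
            z.2 < b + k ∧ b < z.2 + k).card * 2 ^ (n * m - k) := by
          rw [Finset.card_product, Finset.card_singleton, one_mul]
      _ ≤ 2 * k * 2 ^ (n * m - k) := Nat.mul_le_mul_right _ hcard2
  have hPAle : PA.card ≤ m * m * n := by
    rw [hPAcard]
    have h1 : m.choose 2 ≤ m * m := by
      rw [Nat.choose_two_right]
      calc m * (m - 1) / 2 ≤ m * (m - 1) := Nat.div_le_self _ _
        _ ≤ m * m := Nat.mul_le_mul_left m (by omega)
    exact Nat.mul_le_mul h1 (by omega)
  have hS2b : S2 ≤ m ^ 4 * n ^ 2 * 2 ^ (n * m - 2 * k) + 2 * m ^ 2 * n * k * 2 ^ (n * m - k) := by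
    have step1 : S2 ≤ PA.card * (PA.card * 2 ^ (n * m - 2 * k) + 2 * k * 2 ^ (n * m - k)) := by
      refine hS2le1.trans ?_
      calc ∑ z ∈ PA, ∑ w ∈ PA,
            (if z.1 = w.1 ∧ z.2 < w.2 + k ∧ w.2 < z.2 + k then 2 ^ (n * m - k)
              else 2 ^ (n * m - 2 * k))
          ≤ ∑ z ∈ PA, (PA.card * 2 ^ (n * m - 2 * k) + 2 * k * 2 ^ (n * m - k)) := by
            refine Finset.sum_le_sum fun z hz => ?_
            calc ∑ w ∈ PA, (if z.1 = w.1 ∧ z.2 < w.2 + k ∧ w.2 < z.2 + k then 2 ^ (n * m - k)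
                  else 2 ^ (n * m - 2 * k))
                ≤ ∑ w ∈ PA, (2 ^ (n * m - 2 * k) +
                  (if z.1 = w.1 ∧ z.2 < w.2 + k ∧ w.2 < z.2 + k then 2 ^ (n * m - k) else 0)) :=
                  Finset.sum_le_sum fun w hw => hsplit z w
              _ = PA.card * 2 ^ (n * m - 2 * k) + ∑ w ∈ PA,
                  (if z.1 = w.1 ∧ z.2 < w.2 + k ∧ w.2 < z.2 + k then 2 ^ (n * m - k) else 0) := by
                  rw [Finset.sum_add_distrib, Finset.sum_const, smul_eq_mul]
              _ ≤ PA.card * 2 ^ (n * m - 2 * k) + 2 * k * 2 ^ (n * m - k) :=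
                  Nat.add_le_add_left (hbad z hz) _
        _ = PA.card * (PA.card * 2 ^ (n * m - 2 * k) + 2 * k * 2 ^ (n * m - k)) := by
            rw [Finset.sum_const, smul_eq_mul]
    refine step1.trans ?_
    calc PA.card * (PA.card * 2 ^ (n * m - 2 * k) + 2 * k * 2 ^ (n * m - k))
        ≤ (m * m * n) * ((m * m * n) * 2 ^ (n * m - 2 * k) + 2 * k * 2 ^ (n * m - k)) := by
          exact Nat.mul_le_mul hPAle (Nat.add_le_add_right
            (Nat.mul_le_mul_right _ hPAle) _)
      _ = m ^ 4 * n ^ 2 * 2 ^ (n * m - 2 * k) + 2 * m ^ 2 * n * k * 2 ^ (n * m - k) := by ring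
  -- the event is exactly `V ≠ 0`
  have hEvent : ∀ f : Fin m × Fin n → Bool,
      (∃ i j : Fin m, i < j ∧ ∃ a : ℕ, a + k ≤ n ∧
        kmer k (fun c => f (i, c)) a = kmer k (fun c => f (j, c)) a) ↔ V f ≠ 0 := by
    intro f
    constructor
    · rintro ⟨i, j, hij, a, hak, heq⟩ hzero
      rw [hV] at hzero
      simp only at hzero
      rw [Finset.sum_eq_zero_iff] at hzero
      have hz := hzero ((i, j), a) (hPAmem i j a hij hak)
      have hE : E ((i, j), a) f := by
        intro c h1 h2
        exact (kmer_eq_iff _ _ a hak).mp heq c h1 h2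
      have : ind ((i, j), a) f = 1 := if_pos hE
      omega
    · intro hne
      rw [hV] at hne
      simp only at hne
      rw [Ne, Finset.sum_eq_zero_iff] at hne
      push_neg at hne
      obtain ⟨z, hzPA, hznz⟩ := hne
      have hE : E z f := by
        by_contra hE
        exact hznz (if_neg hE)
      exact ⟨z.1.1, z.1.2, (hPA z hzPA).1, z.2, (hPA z hzPA).2,
        (kmer_eq_iff _ _ z.2 (hPA z hzPA).2).mpr hE⟩
  set FS : Finset (Fin m × Fin n → Bool) :=
    Finset.univ.filter (fun f : Fin m × Fin n → Bool => V f ≠ 0) with hFS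
  set NE : ℕ := FS.card with hNEdef
  have hNat : Nat.card {X : Fin m → Fin n → Bool // ∃ i j : Fin m, i < j ∧ ∃ a : ℕ,
      a + k ≤ n ∧ kmer k (X i) a = kmer k (X j) a} = NE := by
    rw [Nat.card_congr (Equiv.subtypeEquiv (Equiv.curry (Fin m) (Fin n) Bool)
      (fun f => (hEvent f).symm)).symm, ← filter_card_eq_nat_card]
  -- Cauchy–Schwarz
  have hsum_eq : ∑ f ∈ FS, V f = S1 := by
    rw [hS1def, hFS]
    exact Finset.sum_filter_ne_zero _
  have hCS : (S1 : ℝ) ^ 2 ≤ (NE : ℝ) * (S2 : ℝ) := by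
    have h1 : ((S1 : ℕ) : ℝ) = ∑ f ∈ FS, (V f : ℝ) := by
      rw [← hsum_eq]
      push_cast
      rfl
    have h2 := Finset.sum_mul_sq_le_sq_mul_sq FS (fun _ => (1 : ℝ)) (fun f => (V f : ℝ))
    simp only [one_mul, one_pow] at h2
    rw [Finset.sum_const, nsmul_eq_mul, mul_one] at h2
    have h3 : ∑ f ∈ FS, (V f : ℝ) ^ 2 ≤ (S2 : ℝ) := by
      have hS2cast : (S2 : ℝ) = ∑ f : Fin m × Fin n → Bool, (V f : ℝ) ^ 2 := by
        rw [hS2def]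
        push_cast
        exact Finset.sum_congr rfl fun f _ => (pow_two _).symm
      rw [hS2cast]
      exact Finset.sum_le_sum_of_subset_of_nonneg (Finset.filter_subset _ _)
        (fun _ _ _ => sq_nonneg _)
    calc (S1 : ℝ) ^ 2 = (∑ f ∈ FS, (V f : ℝ)) ^ 2 := by rw [h1]
      _ ≤ (FS.card : ℝ) * ∑ f ∈ FS, (V f : ℝ) ^ 2 := h2
      _ ≤ (NE : ℝ) * (S2 : ℝ) := by
          rw [hNEdef]
          exact mul_le_mul_of_nonneg_left h3 (Nat.cast_nonneg _)
  -- real arithmetic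
  have hb2 : (2 : ℝ) ≠ 0 := two_ne_zero
  have e1 : (2 : ℝ) ^ (n * m - k) = 2 ^ (n * m) / 2 ^ k := by
    rw [pow_sub₀ _ hb2 hknm, div_eq_mul_inv]
  have e2 : (2 : ℝ) ^ (n * m - 2 * k) = 2 ^ (n * m) / 2 ^ (2 * k) := by
    rw [pow_sub₀ _ hb2 h2knm, div_eq_mul_inv]
  have hS1R : (S1 : ℝ) = (m.choose 2 : ℝ) * ((n - k + 1 : ℕ) : ℝ) * (2 ^ (n * m) / 2 ^ k) := by
    rw [hS1, Nat.cast_mul, Nat.cast_mul, Nat.cast_pow, Nat.cast_ofNat, e1]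
  have hS2R : (S2 : ℝ) ≤ ((m : ℝ) ^ 4 * (n : ℝ) ^ 2 / 2 ^ (2 * k) +
      2 * (m : ℝ) ^ 2 * (n : ℝ) * (k : ℝ) / 2 ^ k) * 2 ^ (n * m) := by
    calc (S2 : ℝ) ≤ ((m ^ 4 * n ^ 2 * 2 ^ (n * m - 2 * k) +
        2 * m ^ 2 * n * k * 2 ^ (n * m - k) : ℕ) : ℝ) := Nat.cast_le.mpr hS2b
      _ = _ := by
          push_cast [e1, e2]
          ring
  have hm0' : 0 < m := lt_of_lt_of_le (by norm_num) hm
  have hn0' : 0 < n := lt_of_le_of_lt (Nat.zero_le k) hkn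
  have hm0 : (0 : ℝ) < (m : ℝ) := Nat.cast_pos.mpr hm0'
  have hn0 : (0 : ℝ) < (n : ℝ) := Nat.cast_pos.mpr hn0'
  have hDpos : (0 : ℝ) < (m : ℝ) ^ 4 * (n : ℝ) ^ 2 / 2 ^ (2 * k) +
      2 * (m : ℝ) ^ 2 * (n : ℝ) * (k : ℝ) / 2 ^ k := by
    have h1 : (0 : ℝ) < (m : ℝ) ^ 4 * (n : ℝ) ^ 2 / 2 ^ (2 * k) := by positivity
    have h2 : (0 : ℝ) ≤ 2 * (m : ℝ) ^ 2 * (n : ℝ) * (k : ℝ) / 2 ^ k := by positivity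
    linarith
  have hTpos : (0 : ℝ) < (2 : ℝ) ^ (n * m) := by positivity
  have hcardΩ : (Fintype.card (Fin m → Fin n → Bool) : ℝ) = 2 ^ (n * m) := by
    have h : Fintype.card (Fin m → Fin n → Bool) = 2 ^ (n * m) := by
      rw [Fintype.card_fun, Fintype.card_fun, Fintype.card_bool, Fintype.card_fin,
        Fintype.card_fin, ← pow_mul]
    rw [h, Nat.cast_pow, Nat.cast_ofNat]
  unfold prob
  rw [hNat, hcardΩ, div_le_div_iff₀ hDpos hTpos]
  refine le_of_mul_le_mul_right ?_ hTpos
  calc ((m.choose 2 : ℝ) * ((n - k + 1 : ℕ) : ℝ) / 2 ^ k) ^ 2 * 2 ^ (n * m) * 2 ^ (n * m)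
      = (S1 : ℝ) ^ 2 := by rw [hS1R]; ring
    _ ≤ (NE : ℝ) * (S2 : ℝ) := hCS
    _ ≤ (NE : ℝ) * (((m : ℝ) ^ 4 * (n : ℝ) ^ 2 / 2 ^ (2 * k) +
        2 * (m : ℝ) ^ 2 * (n : ℝ) * (k : ℝ) / 2 ^ k) * 2 ^ (n * m)) :=
        mul_le_mul_of_nonneg_left hS2R (Nat.cast_nonneg _)
    _ = (NE : ℝ) * ((m : ℝ) ^ 4 * (n : ℝ) ^ 2 / 2 ^ (2 * k) +
        2 * (m : ℝ) ^ 2 * (n : ℝ) * (k : ℝ) / 2 ^ k) * 2 ^ (n * m) := by ring
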